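/- Let T be an ergodic measure-preserving invertible transformation of a probability space. If T is mixing, then every square monotone dynamical sequence of nonnegative integers is ergodic with respect to T: for every measurable B, ∫ |(1/r_n)∑_{i<r_n} χ_B∘T^{-s_{n,i}} − μ(B)|² dμ → 0. -/

import Mathlib

open MeasureTheory Filter Finset

/-- Integer iterate of an invertible transformation. -/
noncomputable def iterZ {X : Type*} [MeasurableSpace X] (T : X ≃ᵐ X) (k : ℤ) : X → X :=
  if 0 ≤ k then (⇑T)^[k.toNat] else (⇑T.symm)^[(-k).toNat]

section helpers

variable {X : Type*} [MeasurableSpace X] (T : X ≃ᵐ X)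

lemma iterZ_eq_perm (k : ℤ) : iterZ T k = ⇑(T.toEquiv ^ k) := by
  unfold iterZ
  split_ifs with h
  · obtain ⟨m, rfl⟩ : ∃ m : ℕ, k = m := ⟨k.toNat, by omega⟩
    rw [zpow_natCast, Equiv.Perm.coe_pow]
    simp
  · obtain ⟨m, rfl⟩ : ∃ m : ℕ, k = -m := ⟨(-k).toNat, by omega⟩
    rw [zpow_neg, zpow_natCast, ← inv_pow, Equiv.Perm.inv_def, Equiv.Perm.coe_pow]
    have : T.toEquiv.symm = T.symm.toEquiv := rfl
    rw [this]
    simp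

lemma iterZ_apply_iterZ (a b : ℤ) (x : X) : iterZ T a (iterZ T b x) = iterZ T (a + b) x := by
  simp only [iterZ_eq_perm, zpow_add]
  rfl

@[simp] lemma iterZ_zero_apply (x : X) : iterZ T 0 x = x := by simp [iterZ_eq_perm]

lemma measurable_iterZ (k : ℤ) : Measurable (iterZ T k) := by
  unfold iterZ
  split_ifs
  · exact T.measurable.iterate _
  · exact T.symm.measurable.iterate _

lemma iterZ_preimage_preimage (a b : ℤ) (A : Set X) :
    iterZ T a ⁻¹' (iterZ T b ⁻¹' A) = iterZ T (b + a) ⁻¹' A := by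
  ext x; simp [Set.mem_preimage, iterZ_apply_iterZ]

lemma iterZ_image (d : ℤ) (A : Set X) : iterZ T d '' A = iterZ T (-d) ⁻¹' A := by
  ext x
  constructor
  · rintro ⟨y, hy, rfl⟩
    simpa [Set.mem_preimage, iterZ_apply_iterZ] using hy
  · intro hx
    exact ⟨iterZ T (-d) x, hx, by simp [iterZ_apply_iterZ]⟩

lemma measurePreserving_iterZ {μ : Measure X} (hT : MeasurePreserving T μ μ) (k : ℤ) :
    MeasurePreserving (iterZ T k) μ μ := by
  unfold iterZ
  split_ifs
  · exact hT.iterate _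
  · exact (MeasurePreserving.symm T hT).iterate _

end helpers

theorem mixing_imp_square_monotone_ergodic
    {X : Type*} [MeasurableSpace X] (μ : Measure X) [IsProbabilityMeasure μ]
    (T : X ≃ᵐ X) (hT : MeasurePreserving T μ μ) (hE : Ergodic (⇑T) μ)
    (hmix : ∀ A B : Set X, MeasurableSet A → MeasurableSet B →
      Tendsto (fun n : ℕ => (μ (iterZ T (n : ℤ) '' A ∩ B)).toReal)
        atTop (nhds ((μ A).toReal * (μ B).toReal)))
    (r : ℕ → ℕ) (hrtop : Tendsto r atTop atTop)
    (s : ℕ → ℕ → ℤ) (hnn : ∀ n i, i < r n → 0 ≤ s n i)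
    (hsq : ∀ M : ℕ, 0 < M →
      Tendsto (fun n : ℕ =>
          (((Finset.range (r n) ×ˢ Finset.range (r n)).filter
              (fun p => |s n p.1 - s n p.2| < (M : ℤ))).card : ℝ) / (r n : ℝ) ^ 2)
        atTop (nhds 0)) :
    ∀ B : Set X, MeasurableSet B →
      Tendsto (fun n : ℕ =>
          ∫ x, |(1 / (r n : ℝ)) * ∑ i ∈ Finset.range (r n),
              B.indicator (fun _ => (1 : ℝ)) (iterZ T (-(s n i)) x) - (μ B).toReal| ^ 2 ∂μ)
        atTop (nhds 0) := by
  intro B hB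
  set c : ℝ := (μ B).toReal with hc
  have hmp : ∀ k : ℤ, MeasurePreserving (iterZ T k) μ μ := measurePreserving_iterZ T hT
  set S : ℤ → Set X := fun k => iterZ T (-k) ⁻¹' B with hS
  have hSm : ∀ k, MeasurableSet (S k) := fun k => (measurable_iterZ T _) hB
  have hμS : ∀ k, μ (S k) = μ B := fun k => (hmp _).measure_preimage hB.nullMeasurableSet
  set g : ℤ → ℝ := fun d => (μ (S d ∩ B)).toReal with hgdef
  have hgm : ∀ d, MeasurableSet (S d ∩ B) := fun d => (hSm d).inter hB
  -- key: μ (S a ∩ S b) = μ (S (a-b) ∩ B)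
  have hkey : ∀ a b : ℤ, μ (S a ∩ S b) = μ (S (a - b) ∩ B) := by
    intro a b
    have h1 : iterZ T (-b) ⁻¹' (S (a - b) ∩ B) = S a ∩ S b := by
      rw [Set.preimage_inter]
      congr 1
      show iterZ T (-b) ⁻¹' (iterZ T (-(a - b)) ⁻¹' B) = S a
      rw [iterZ_preimage_preimage]
      congr 2
      ring
    rw [← h1, (hmp (-b)).measure_preimage (hgm (a - b)).nullMeasurableSet]
  have hS0 : S 0 = B := by
    ext x; simp [hS, Set.mem_preimage]
  have hgsymm : ∀ d : ℤ, g (-d) = g d := by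
    intro d
    have h1 := hkey 0 d
    simp only [hS0, zero_sub] at h1
    rw [hgdef]
    simp only [h1.symm, Set.inter_comm B (S d)]
  have hgtend : Tendsto (fun n : ℕ => g n) atTop (nhds (c * c)) := by
    have h := hmix B B hB hB
    have heq : ∀ n : ℕ, (μ (iterZ T (n : ℤ) '' B ∩ B)).toReal = g n := by
      intro n; rw [iterZ_image]
    simpa only [heq] using h
  have hgbd : ∀ d : ℤ, |g d - c * c| ≤ 2 := by
    intro d
    have h1 : (0:ℝ) ≤ g d := ENNReal.toReal_nonneg
    have h2 : g d ≤ 1 := by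
      rw [hgdef]
      simpa using ENNReal.toReal_mono (by simp) (prob_le_one (μ := μ) (s := S d ∩ B))
    have hc0 : (0:ℝ) ≤ c := ENNReal.toReal_nonneg
    have hc1 : c ≤ 1 := by
      rw [hc]
      simpa using ENNReal.toReal_mono (by simp) (prob_le_one (μ := μ) (s := B))
    rw [abs_le]
    constructor <;> nlinarith
  have hgfar : ∀ ε : ℝ, 0 < ε → ∃ M : ℕ, 0 < M ∧ ∀ d : ℤ, (M : ℤ) ≤ |d| → |g d - c * c| < ε := by
    intro ε hε
    obtain ⟨N, hN⟩ := Metric.tendsto_atTop.mp hgtend ε hε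
    refine ⟨N + 1, Nat.succ_pos _, fun d hd => ?_⟩
    rcases le_or_gt 0 d with h0 | h0
    · rw [abs_of_nonneg h0] at hd
      have h2 : N ≤ d.toNat := by omega
      have h3 := hN d.toNat h2
      rw [Real.dist_eq] at h3
      have h4 : ((d.toNat : ℕ) : ℤ) = d := Int.toNat_of_nonneg h0
      rwa [h4] at h3
    · rw [abs_of_neg h0] at hd
      have h2 : N ≤ (-d).toNat := by omega
      have h3 := hN (-d).toNat h2
      rw [Real.dist_eq] at h3
      have h4 : (((-d).toNat : ℕ) : ℤ) = -d := Int.toNat_of_nonneg (by omega)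
      rw [h4, hgsymm d] at h3
      exact h3
  -- per-n integral identity
  have hInt : ∀ n : ℕ, 0 < r n →
      ∫ x, |(1 / (r n : ℝ)) * ∑ i ∈ Finset.range (r n),
          B.indicator (fun _ => (1 : ℝ)) (iterZ T (-(s n i)) x) - c| ^ 2 ∂μ
        = (1 / (r n : ℝ) ^ 2) *
            ∑ p ∈ Finset.range (r n) ×ˢ Finset.range (r n),
              (g (s n p.1 - s n p.2) - c * c) := by
    intro n hR
    have hRne : ((r n : ℝ)) ≠ 0 := Nat.cast_ne_zero.mpr hR.ne'
    set u : ℕ → X → ℝ := fun i x => (S (s n i)).indicator (fun _ => (1:ℝ)) x - c with hu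
    have hprod_eq : ∀ i j : ℕ, (fun x => u i x * u j x)
        = fun x => (S (s n i) ∩ S (s n j)).indicator (fun _ => (1:ℝ)) x
            - c * (S (s n i)).indicator (fun _ => (1:ℝ)) x
            - c * (S (s n j)).indicator (fun _ => (1:ℝ)) x + c * c := by
      intro i j
      funext x
      by_cases h1 : x ∈ S (s n i) <;> by_cases h2 : x ∈ S (s n j) <;>
        simp [hu, Set.indicator_apply, h1, h2, Set.mem_inter_iff] <;> ring
    have hintprod : ∀ i j : ℕ, Integrable (fun x => u i x * u j x) μ := by
      intro i j
      rw [hprod_eq]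
      exact ((((integrable_const (1:ℝ)).indicator ((hSm _).inter (hSm _))).sub
        (((integrable_const (1:ℝ)).indicator (hSm _)).const_mul c)).sub
        (((integrable_const (1:ℝ)).indicator (hSm _)).const_mul c)).add (integrable_const _)
    have huv : ∀ i j : ℕ, ∫ x, u i x * u j x ∂μ = g (s n i - s n j) - c * c := by
      intro i j
      rw [hprod_eq]
      rw [integral_add, integral_sub, integral_sub]
      · have e1 : ∫ x, (S (s n i) ∩ S (s n j)).indicator (fun _ => (1:ℝ)) x ∂μ
            = g (s n i - s n j) := by
          rw [integral_indicator_const (1:ℝ) ((hSm _).inter (hSm _)), measureReal_def, hkey, hgdef]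
          simp
        have e2 : ∫ x, c * (S (s n i)).indicator (fun _ => (1:ℝ)) x ∂μ = c * c := by
          rw [integral_const_mul, integral_indicator_const (1:ℝ) (hSm _), measureReal_def, hμS]
          simp [hc]
        have e3 : ∫ x, c * (S (s n j)).indicator (fun _ => (1:ℝ)) x ∂μ = c * c := by
          rw [integral_const_mul, integral_indicator_const (1:ℝ) (hSm _), measureReal_def, hμS]
          simp [hc]
        have e4 : ∫ (_ : X), c * c ∂μ = c * c := by simp
        rw [e1, e2, e3, e4]; ring
      · exact (integrable_const (1:ℝ)).indicator ((hSm _).inter (hSm _))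
      · exact ((integrable_const (1:ℝ)).indicator (hSm _)).const_mul c
      · exact (((integrable_const (1:ℝ)).indicator ((hSm _).inter (hSm _))).sub
          (((integrable_const (1:ℝ)).indicator (hSm _)).const_mul c))
      · exact ((integrable_const (1:ℝ)).indicator (hSm _)).const_mul c
      · exact ((((integrable_const (1:ℝ)).indicator ((hSm _).inter (hSm _))).sub
          (((integrable_const (1:ℝ)).indicator (hSm _)).const_mul c)).sub
          (((integrable_const (1:ℝ)).indicator (hSm _)).const_mul c))
      · exact integrable_const _
    have hpt : ∀ x : X, |(1 / (r n : ℝ)) * ∑ i ∈ Finset.range (r n),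
          B.indicator (fun _ => (1 : ℝ)) (iterZ T (-(s n i)) x) - c| ^ 2
        = (1 / (r n : ℝ) ^ 2) * ∑ p ∈ Finset.range (r n) ×ˢ Finset.range (r n),
            u p.1 x * u p.2 x := by
      intro x
      have hind : ∀ i : ℕ, B.indicator (fun _ => (1:ℝ)) (iterZ T (-(s n i)) x)
          = (S (s n i)).indicator (fun _ => (1:ℝ)) x := by
        intro i
        by_cases h : x ∈ S (s n i)
        · have h' : iterZ T (-(s n i)) x ∈ B := h
          simp [Set.indicator_apply, h, h']
        · have h' : iterZ T (-(s n i)) x ∉ B := h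
          simp [Set.indicator_apply, h, h']
      simp_rw [hind]
      have h1 : (1 / (r n : ℝ)) * ∑ i ∈ Finset.range (r n),
            (S (s n i)).indicator (fun _ => (1:ℝ)) x - c
          = (1 / (r n : ℝ)) * ∑ i ∈ Finset.range (r n), u i x := by
        simp only [hu, Finset.sum_sub_distrib, Finset.sum_const, Finset.card_range,
          nsmul_eq_mul]
        field_simp
      rw [h1, sq_abs, mul_pow, Finset.sum_product]
      rw [pow_two (∑ i ∈ Finset.range (r n), u i x), Finset.sum_mul_sum]
      ring
    simp_rw [hpt]
    rw [integral_const_mul, integral_finset_sum _ (fun p _ => hintprod p.1 p.2)]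
    congr 1
    exact Finset.sum_congr rfl fun p _ => huv p.1 p.2
  -- final epsilon argument
  rw [Metric.tendsto_atTop]
  intro ε hε
  obtain ⟨M, hM, hMfar⟩ := hgfar (ε / 2) (by positivity)
  obtain ⟨N1, hN1⟩ := Metric.tendsto_atTop.mp (hsq M hM) (ε / 4) (by positivity)
  obtain ⟨N2, hN2⟩ := eventually_atTop.mp (hrtop.eventually (eventually_ge_atTop 1))
  refine ⟨max N1 N2, fun n hn => ?_⟩
  have hR : 0 < r n := hN2 n (le_trans (le_max_right _ _) hn)
  have hQ : (0:ℝ) < (r n : ℝ) ^ 2 := by positivity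
  rw [Real.dist_eq, sub_zero, hInt n hR]
  set P := Finset.range (r n) ×ˢ Finset.range (r n) with hP
  set Pc := P.filter (fun p => |s n p.1 - s n p.2| < (M : ℤ)) with hPc
  have hcard : (Pc.card : ℝ) / (r n : ℝ) ^ 2 < ε / 4 := by
    have := hN1 n (le_trans (le_max_left _ _) hn)
    rw [Real.dist_eq, sub_zero, abs_of_nonneg (by positivity)] at this
    exact this
  have hsum : ∑ p ∈ P, |g (s n p.1 - s n p.2) - c * c|
      ≤ (Pc.card : ℝ) * 2 + (r n : ℝ) ^ 2 * (ε / 2) := by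
    rw [← Finset.sum_filter_add_sum_filter_not P (fun p => |s n p.1 - s n p.2| < (M : ℤ))]
    have b1 : ∑ p ∈ Pc, |g (s n p.1 - s n p.2) - c * c| ≤ (Pc.card : ℝ) * 2 := by
      have := Finset.sum_le_card_nsmul Pc (fun p => |g (s n p.1 - s n p.2) - c * c|) 2
        (fun p _ => hgbd _)
      simpa [nsmul_eq_mul] using this
    have b2 : ∑ p ∈ P.filter (fun p => ¬ |s n p.1 - s n p.2| < (M : ℤ)),
        |g (s n p.1 - s n p.2) - c * c| ≤ (r n : ℝ) ^ 2 * (ε / 2) := by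
      have hle : ∀ p ∈ P.filter (fun p => ¬ |s n p.1 - s n p.2| < (M : ℤ)),
          |g (s n p.1 - s n p.2) - c * c| ≤ ε / 2 := by
        intro p hp
        rw [Finset.mem_filter] at hp
        exact (hMfar _ (not_lt.mp hp.2)).le
      have := Finset.sum_le_card_nsmul _ _ _ hle
      have hcard2 : ((P.filter (fun p => ¬ |s n p.1 - s n p.2| < (M : ℤ))).card : ℝ)
          ≤ (r n : ℝ) ^ 2 := by
        have h1 : (P.filter (fun p => ¬ |s n p.1 - s n p.2| < (M : ℤ))).card ≤ P.card :=
          Finset.card_filter_le _ _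
        have h2 : P.card = r n * r n := by
          rw [hP, Finset.card_product, Finset.card_range]
        calc ((P.filter (fun p => ¬ |s n p.1 - s n p.2| < (M : ℤ))).card : ℝ)
            ≤ (P.card : ℝ) := Nat.cast_le.mpr h1
          _ = (r n : ℝ) ^ 2 := by rw [h2]; push_cast; ring
      calc ∑ p ∈ P.filter (fun p => ¬ |s n p.1 - s n p.2| < (M : ℤ)),
            |g (s n p.1 - s n p.2) - c * c|
          ≤ ((P.filter (fun p => ¬ |s n p.1 - s n p.2| < (M : ℤ))).card : ℝ) * (ε / 2) := by
            simpa [nsmul_eq_mul] using this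
        _ ≤ (r n : ℝ) ^ 2 * (ε / 2) := by
            apply mul_le_mul_of_nonneg_right hcard2 (by positivity)
    linarith
  have habs : |(1 / (r n : ℝ) ^ 2) * ∑ p ∈ P, (g (s n p.1 - s n p.2) - c * c)|
      ≤ (1 / (r n : ℝ) ^ 2) * ∑ p ∈ P, |g (s n p.1 - s n p.2) - c * c| := by
    rw [abs_mul, abs_of_nonneg (by positivity : (0:ℝ) ≤ 1 / (r n : ℝ) ^ 2)]
    exact mul_le_mul_of_nonneg_left (Finset.abs_sum_le_sum_abs _ _) (by positivity)
  have hfin : (1 / (r n : ℝ) ^ 2) * ((Pc.card : ℝ) * 2 + (r n : ℝ) ^ 2 * (ε / 2))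
      = 2 * ((Pc.card : ℝ) / (r n : ℝ) ^ 2) + ε / 2 := by
    field_simp
  calc |(1 / (r n : ℝ) ^ 2) * ∑ p ∈ P, (g (s n p.1 - s n p.2) - c * c)|
      ≤ (1 / (r n : ℝ) ^ 2) * ∑ p ∈ P, |g (s n p.1 - s n p.2) - c * c| := habs
    _ ≤ (1 / (r n : ℝ) ^ 2) * ((Pc.card : ℝ) * 2 + (r n : ℝ) ^ 2 * (ε / 2)) :=
        mul_le_mul_of_nonneg_left hsum (by positivity)
    _ = 2 * ((Pc.card : ℝ) / (r n : ℝ) ^ 2) + ε / 2 := hfin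
    _ < ε := by linarith
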